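/- If G is a penny graph on n ≥ 5 nodes and the complement of G is disconnected, then the complement has exactly two components, one of which is a single vertex, and n ∈ {5,6,7}; i.e., G is realized by one disk touching all the other n−1 disks (of which there are 4, 5, or 6). -/

import Mathlib

/-- Algebraic core of the no-`K_{2,3}` property: two distinct centers cannot have
three distinct common points on their unit circles. -/
lemma key23 (ax ay bx bY px py qx qy rx ry : ℝ)
    (hab : (ax-bx)^2+(ay-bY)^2 ≠ 0)
    (hpq : (px-qx)^2+(py-qy)^2 ≠ 0)
    (hpr : (px-rx)^2+(py-ry)^2 ≠ 0)
    (hqr : (qx-rx)^2+(qy-ry)^2 ≠ 0)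
    (hpa : (px-ax)^2+(py-ay)^2 = 1) (hpb : (px-bx)^2+(py-bY)^2 = 1)
    (hqa : (qx-ax)^2+(qy-ay)^2 = 1) (hqb : (qx-bx)^2+(qy-bY)^2 = 1)
    (hra : (rx-ax)^2+(ry-ay)^2 = 1) (hrb : (rx-bx)^2+(ry-bY)^2 = 1) : False := by
  have h1 : (qx-px)*(ax-bx) + (qy-py)*(ay-bY) = 0 := by
    linear_combination (hpa - hpb - hqa + hqb)/2
  have h2 : (rx-px)*(ax-bx) + (ry-py)*(ay-bY) = 0 := by
    linear_combination (hpa - hpb - hra + hrb)/2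
  have hc0 : ((qx-px)*(ry-py) - (qy-py)*(rx-px)) * ((ax-bx)^2+(ay-bY)^2) = 0 := by
    linear_combination ((qx-px)*(ay-bY)-(qy-py)*(ax-bx))*h2 - ((rx-px)*(ay-bY)-(ry-py)*(ax-bx))*h1
  have hcross : (qx-px)*(ry-py) - (qy-py)*(rx-px) = 0 :=
    (mul_eq_zero.mp hc0).resolve_right hab
  have h3 : 2*((qx-px)*(px-ax)+(qy-py)*(py-ay)) + ((qx-px)^2+(qy-py)^2) = 0 := by
    linear_combination hqa - hpa
  have h4 : 2*((rx-px)*(px-ax)+(ry-py)*(py-ay)) + ((rx-px)^2+(ry-py)^2) = 0 := by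
    linear_combination hra - hpa
  have h5 : ((rx-px)*(px-ax)+(ry-py)*(py-ay)) * ((qx-px)^2+(qy-py)^2)
      = ((qx-px)*(rx-px)+(qy-py)*(ry-py)) * ((qx-px)*(px-ax)+(qy-py)*(py-ay)) := by
    linear_combination ((qx-px)*(py-ay)-(qy-py)*(px-ax)) * hcross
  have h6 : ((qx-px)*(px-ax)+(qy-py)*(py-ay)) * ((rx-px)^2+(ry-py)^2)
      = ((qx-px)*(rx-px)+(qy-py)*(ry-py)) * ((rx-px)*(px-ax)+(ry-py)*(py-ay)) := by
    linear_combination (-((rx-px)*(py-ay)-(ry-py)*(px-ax))) * hcross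
  have h7 : (((rx-px)^2+(ry-py)^2) - ((qx-px)*(rx-px)+(qy-py)*(ry-py))) * ((qx-px)^2+(qy-py)^2) = 0 := by
    linear_combination ((qx-px)^2+(qy-py)^2)*h4 - 2*h5 - ((qx-px)*(rx-px)+(qy-py)*(ry-py))*h3
  have h8 : (((qx-px)^2+(qy-py)^2) - ((qx-px)*(rx-px)+(qy-py)*(ry-py))) * ((rx-px)^2+(ry-py)^2) = 0 := by
    linear_combination ((rx-px)^2+(ry-py)^2)*h3 - 2*h6 - ((qx-px)*(rx-px)+(qy-py)*(ry-py))*h4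
  have huu : (px-qx)^2+(py-qy)^2 = (qx-px)^2+(qy-py)^2 := by ring
  have hvv : (px-rx)^2+(py-ry)^2 = (rx-px)^2+(ry-py)^2 := by ring
  have h7' := (mul_eq_zero.mp h7).resolve_right (huu ▸ hpq)
  have h8' := (mul_eq_zero.mp h8).resolve_right (hvv ▸ hpr)
  apply hqr
  linear_combination h7' + h8'

open Real Complex in
/-- At most 6 points can lie on a unit circle with pairwise distances at least 1. -/
lemma six_around {α : Type*} [DecidableEq α] (s : Finset α)
    (q : α → EuclideanSpace ℝ (Fin 2)) (c : EuclideanSpace ℝ (Fin 2))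
    (hq : ∀ j ∈ s, dist (q j) c = 1)
    (hs : ∀ a ∈ s, ∀ b ∈ s, a ≠ b → 1 ≤ dist (q a) (q b)) : s.card ≤ 6 := by
  by_contra h
  push_neg at h
  set z : α → ℂ := fun j => ⟨q j 0 - c 0, q j 1 - c 1⟩ with hz
  have hd2 : ∀ x y : EuclideanSpace ℝ (Fin 2),
      dist x y ^ 2 = (x 0 - y 0)^2 + (x 1 - y 1)^2 := by
    intro x y
    rw [EuclideanSpace.dist_eq, Real.sq_sqrt (by positivity)]
    simp [Fin.sum_univ_two, Real.dist_eq, sq_abs]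
  have habs : ∀ j ∈ s, ‖z j‖ = 1 := by
    intro j hj
    have h1 : ‖z j‖ ^ 2 = 1 := by
      rw [Complex.sq_norm, Complex.normSq_mk]
      have := hd2 (q j) c
      rw [hq j hj] at this
      nlinarith [this]
    nlinarith [norm_nonneg (z j)]
  set θ : α → ℝ := fun j => Complex.arg (z j) with hθ
  have hpi : (0:ℝ) < π := Real.pi_pos
  have hcos : ∀ j ∈ s, (z j).re = Real.cos (θ j) ∧ (z j).im = Real.sin (θ j) := by
    intro j hj
    have hne : z j ≠ 0 := by
      intro h0
      have := habs j hj
      rw [h0] at this; simp at this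
    constructor
    · rw [hθ]; rw [Complex.cos_arg hne, habs j hj]; simp
    · rw [hθ]; rw [Complex.sin_arg, habs j hj]; simp
  have hmaps : ∀ j ∈ s, (⌈(θ j + π) * 3 / π⌉ : ℤ) ∈ Finset.Icc (1:ℤ) 6 := by
    intro j hj
    have h1 : -π < θ j := Complex.neg_pi_lt_arg _
    have h2 : θ j ≤ π := Complex.arg_le_pi _
    rw [Finset.mem_Icc]
    refine ⟨?_, ?_⟩
    · have hx : (0:ℝ) < (θ j + π) * 3 / π := by
        apply div_pos (by nlinarith) hpi
      have := Int.ceil_pos.mpr hx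
      omega
    · apply Int.ceil_le.mpr
      rw [div_le_iff₀ hpi]
      push_cast
      nlinarith
  have hcard : (Finset.Icc (1:ℤ) 6).card = 6 := by decide
  obtain ⟨a, ha, b, hb, hab, heq⟩ :=
    Finset.exists_ne_map_eq_of_card_lt_of_maps_to (by rw [hcard]; exact h) hmaps
  have hlt : |θ a - θ b| < π / 3 := by
    have h1 : (θ a + π) * 3 / π ≤ ⌈(θ a + π) * 3 / π⌉ := Int.le_ceil _
    have h2 : ((⌈(θ a + π) * 3 / π⌉ : ℝ) - 1) < (θ a + π) * 3 / π := by
      have := Int.ceil_lt_add_one ((θ a + π) * 3 / π); linarith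
    have h3 : (θ b + π) * 3 / π ≤ ⌈(θ b + π) * 3 / π⌉ := Int.le_ceil _
    have h4 : ((⌈(θ b + π) * 3 / π⌉ : ℝ) - 1) < (θ b + π) * 3 / π := by
      have := Int.ceil_lt_add_one ((θ b + π) * 3 / π); linarith
    rw [heq] at h1 h2
    rw [div_le_iff₀ hpi] at h1 h3
    rw [lt_div_iff₀ hpi] at h2 h4
    rw [abs_lt]
    constructor <;> nlinarith
  have hca := hcos a ha
  have hcb := hcos b hb
  have hdist2 : dist (q a) (q b) ^ 2 = 2 - 2 * Real.cos (θ a - θ b) := by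
    rw [hd2, Real.cos_sub]
    have e1 : q a 0 - q b 0 = (z a).re - (z b).re := by simp [hz]
    have e2 : q a 1 - q b 1 = (z a).im - (z b).im := by simp [hz]
    rw [e1, e2, hca.1, hca.2, hcb.1, hcb.2]
    have s1 := Real.sin_sq_add_cos_sq (θ a)
    have s2 := Real.sin_sq_add_cos_sq (θ b)
    nlinarith
  have hcosgt : 1/2 < Real.cos (θ a - θ b) := by
    have h5 : Real.cos (π/3) < Real.cos |θ a - θ b| :=
      Real.cos_lt_cos_of_nonneg_of_le_pi (abs_nonneg _) (by linarith) hlt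
    rw [Real.cos_abs, Real.cos_pi_div_three] at h5
    linarith
  have hge := hs a ha b hb hab
  nlinarith [hdist2, hcosgt, hge]

theorem penny_graph_complement_disconnected
    (n : ℕ) (hn : 5 ≤ n)
    (p : Fin n → EuclideanSpace ℝ (Fin 2))
    (hsep : ∀ i j, i ≠ j → 1 ≤ dist (p i) (p j))
    (G : SimpleGraph (Fin n)) [DecidableRel G.Adj]
    (hG : ∀ i j, G.Adj i j ↔ (i ≠ j ∧ dist (p i) (p j) = 1))
    (hconn : ¬ Gᶜ.Connected) :
    (n = 5 ∨ n = 6 ∨ n = 7) ∧ ∃ i : Fin n, ∀ j, j ≠ i → G.Adj i j := by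
  classical
  have hd2 : ∀ x y : EuclideanSpace ℝ (Fin 2),
      dist x y ^ 2 = (x 0 - y 0)^2 + (x 1 - y 1)^2 := by
    intro x y
    rw [EuclideanSpace.dist_eq, Real.sq_sqrt (by positivity)]
    simp [Fin.sum_univ_two, Real.dist_eq, sq_abs]
  have hne0 : ∀ i j : Fin n, i ≠ j → (p i 0 - p j 0)^2 + (p i 1 - p j 1)^2 ≠ 0 := by
    intro i j hij
    have h1 := hsep i j hij
    have h2 := hd2 (p i) (p j)
    nlinarith [h1, h2]
  have hone : ∀ i j : Fin n, dist (p i) (p j) = 1 →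
      (p i 0 - p j 0)^2 + (p i 1 - p j 1)^2 = 1 := by
    intro i j h
    have h2 := hd2 (p i) (p j)
    rw [h] at h2
    simpa using h2.symm
  -- no K_{2,3}
  have hK : ∀ a1 a2 b1 b2 b3 : Fin n, a1 ≠ a2 → b1 ≠ b2 → b1 ≠ b3 → b2 ≠ b3 →
      dist (p a1) (p b1) = 1 → dist (p a1) (p b2) = 1 → dist (p a1) (p b3) = 1 →
      dist (p a2) (p b1) = 1 → dist (p a2) (p b2) = 1 → dist (p a2) (p b3) = 1 → False := by
    intro a1 a2 b1 b2 b3 h12 hb12 hb13 hb23 d11 d12 d13 d21 d22 d23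
    exact key23 (p a1 0) (p a1 1) (p a2 0) (p a2 1) (p b1 0) (p b1 1)
      (p b2 0) (p b2 1) (p b3 0) (p b3 1)
      (hne0 _ _ h12) (hne0 _ _ hb12) (hne0 _ _ hb13) (hne0 _ _ hb23)
      (hone b1 a1 (by rw [dist_comm]; exact d11))
      (hone b1 a2 (by rw [dist_comm]; exact d21))
      (hone b2 a1 (by rw [dist_comm]; exact d12))
      (hone b2 a2 (by rw [dist_comm]; exact d22))
      (hone b3 a1 (by rw [dist_comm]; exact d13))
      (hone b3 a2 (by rw [dist_comm]; exact d23))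
  haveI : Nonempty (Fin n) := ⟨⟨0, by omega⟩⟩
  rw [SimpleGraph.connected_iff] at hconn
  push_neg at hconn
  have hpre : ¬ Gᶜ.Preconnected := fun h => by haveI := hconn h; exact IsEmpty.false (⟨0, by omega⟩ : Fin n)
  unfold SimpleGraph.Preconnected at hpre
  push_neg at hpre
  obtain ⟨u, v, huv⟩ := hpre
  have hcr : ∀ a b : Fin n, Gᶜ.Reachable u a → ¬ Gᶜ.Reachable u b → G.Adj a b := by
    intro a b hra hrb
    have hne : a ≠ b := by rintro rfl; exact hrb hra
    by_contra hadj
    have hc : Gᶜ.Adj a b := by rw [SimpleGraph.compl_adj]; exact ⟨hne, hadj⟩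
    exact hrb (hra.trans hc.reachable)
  set A : Finset (Fin n) := Finset.univ.filter (fun x => Gᶜ.Reachable u x) with hA
  set B : Finset (Fin n) := Finset.univ.filter (fun x => ¬ Gᶜ.Reachable u x) with hB
  have hAmem : ∀ x, x ∈ A ↔ Gᶜ.Reachable u x := by intro x; simp [hA]
  have hBmem : ∀ x, x ∈ B ↔ ¬ Gᶜ.Reachable u x := by intro x; simp [hB]
  have hAB : A.card + B.card = n := by
    rw [hA, hB, Finset.card_filter_add_card_filter_not]
    simp
  have hu : u ∈ A := (hAmem u).mpr (SimpleGraph.Reachable.refl u)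
  have hv : v ∈ B := (hBmem v).mpr huv
  -- adjacency across the partition
  have hadj : ∀ a ∈ A, ∀ b ∈ B, G.Adj a b := by
    intro a ha b hb
    exact hcr a b ((hAmem a).mp ha) ((hBmem b).mp hb)
  have hcenter : ∃ i, ∀ j, j ≠ i → G.Adj i j := by
    by_cases hA1 : A.card = 1
    · refine ⟨u, fun j hj => ?_⟩
      obtain ⟨w, hw⟩ := Finset.card_eq_one.mp hA1
      have huw : u = w := by have := hu; rw [hw] at this; simpa using this
      have hjB : j ∈ B := by
        rw [hBmem]
        intro hr
        have : j ∈ A := (hAmem j).mpr hr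
        rw [hw] at this
        simp at this
        exact hj (this.trans huw.symm)
      exact hadj u hu j hjB
    · by_cases hB1 : B.card = 1
      · refine ⟨v, fun j hj => ?_⟩
        obtain ⟨w, hw⟩ := Finset.card_eq_one.mp hB1
        have hvw : v = w := by have := hv; rw [hw] at this; simpa using this
        have hjA : j ∈ A := by
          rw [hAmem]
          by_contra hr
          have : j ∈ B := (hBmem j).mpr hr
          rw [hw] at this
          simp at this
          exact hj (this.trans hvw.symm)
        exact (hadj j hjA v hv).symm
      · exfalso
        have hA2 : 2 ≤ A.card := by
          have : 0 < A.card := Finset.card_pos.mpr ⟨u, hu⟩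
          omega
        have hB2 : 2 ≤ B.card := by
          have : 0 < B.card := Finset.card_pos.mpr ⟨v, hv⟩
          omega
        have h3 : 3 ≤ A.card ∨ 3 ≤ B.card := by omega
        rcases h3 with h3 | h3
        · obtain ⟨x, hx, y, hy, z, hz, hxy, hxz, hyz⟩ := Finset.two_lt_card.mp (show 2 < A.card by omega)
          obtain ⟨s, hsB, t, htB, hst⟩ := Finset.one_lt_card.mp (by omega : 1 < B.card)
          exact hK s t x y z hst hxy hxz hyz
            (by rw [dist_comm]; exact ((hG x s).mp (hadj x hx s hsB)).2)
            (by rw [dist_comm]; exact ((hG y s).mp (hadj y hy s hsB)).2)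
            (by rw [dist_comm]; exact ((hG z s).mp (hadj z hz s hsB)).2)
            (by rw [dist_comm]; exact ((hG x t).mp (hadj x hx t htB)).2)
            (by rw [dist_comm]; exact ((hG y t).mp (hadj y hy t htB)).2)
            (by rw [dist_comm]; exact ((hG z t).mp (hadj z hz t htB)).2)
        · obtain ⟨x, hx, y, hy, z, hz, hxy, hxz, hyz⟩ := Finset.two_lt_card.mp (show 2 < B.card by omega)
          obtain ⟨s, hsA, t, htA, hst⟩ := Finset.one_lt_card.mp (by omega : 1 < A.card)
          exact hK s t x y z hst hxy hxz hyz
            ((hG s x).mp (hadj s hsA x hx)).2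
            ((hG s y).mp (hadj s hsA y hy)).2
            ((hG s z).mp (hadj s hsA z hz)).2
            ((hG t x).mp (hadj t htA x hx)).2
            ((hG t y).mp (hadj t htA y hy)).2
            ((hG t z).mp (hadj t htA z hz)).2
  obtain ⟨i, hi⟩ := hcenter
  have h6 : (Finset.univ.erase i).card ≤ 6 := by
    apply six_around _ p (p i)
    · intro j hj
      have hji : j ≠ i := (Finset.mem_erase.mp hj).1
      have := (hG i j).mp (hi j hji)
      rw [dist_comm]
      exact this.2
    · intro a _ b _ hab
      exact hsep a b hab
  have hcard : (Finset.univ.erase i).card = n - 1 := by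
    rw [Finset.card_erase_of_mem (Finset.mem_univ i)]
    simp
  exact ⟨by omega, ⟨i, hi⟩⟩
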